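/- Let E be a monotonically complete Banach lattice with the Fatou property and (T_i)_{i∈I} a mutually commuting family of positive linear contractions on E with common fixed space F. If G ⊆ F has a supremum g_E ≥ 0 in E, then the supremum g_F of G within F satisfies ‖g_F‖ = ‖g_E‖. -/

import Mathlib

/-- Main theorem, part (d), second half: if moreover the supremum `gE` of `G` in `E`
is positive, then the supremum `gF` of `G` within the common fixed space `F`
satisfies `‖gF‖ = ‖gE‖`. -/
theorem norm_sup_in_fixed_space
    {E : Type*} [NormedAddCommGroup E] [Lattice E] [HasSolidNorm E] [IsOrderedAddMonoid E] [NormedSpace ℝ E] [CompleteSpace E]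
    (hmc : ∀ D : Set E, D.Nonempty → DirectedOn (· ≤ ·) D → (∀ x ∈ D, 0 ≤ x) →
      (∃ C : ℝ, ∀ x ∈ D, ‖x‖ ≤ C) → ∃ b : E, IsLUB D b)
    (hfatou : ∀ (D : Set E) (b : E), D.Nonempty → DirectedOn (· ≤ ·) D →
      (∀ x ∈ D, 0 ≤ x) → IsLUB D b → ‖b‖ = ⨆ x : D, ‖(x : E)‖)
    {I : Type*} (T : I → E →L[ℝ] E)
    (hpos : ∀ i, ∀ x : E, 0 ≤ x → 0 ≤ T i x) (hcontr : ∀ i, ‖T i‖ ≤ 1)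
    (hcomm : ∀ i j, (T i).comp (T j) = (T j).comp (T i))
    (G : Set E) (hG : ∀ x ∈ G, ∀ i, T i x = x)
    (gE : E) (hlub : IsLUB G gE) (hgE : 0 ≤ gE)
    (gF : E) (hgF : IsLeast {h : E | (∀ i, T i h = h) ∧ ∀ x ∈ G, x ≤ h} gF) :
    ‖gF‖ = ‖gE‖ := by
  -- monotonicity of each `T i`
  have hmono : ∀ i, ∀ x y : E, x ≤ y → T i x ≤ T i y := by
    intro i x y hxy
    have h0 : (0 : E) ≤ T i (y - x) := hpos i _ (sub_nonneg.mpr hxy)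
    rw [map_sub] at h0
    exact sub_nonneg.mp h0
  -- norm contraction
  have hnorm : ∀ i, ∀ x : E, ‖T i x‖ ≤ ‖x‖ := by
    intro i x
    calc ‖T i x‖ ≤ ‖T i‖ * ‖x‖ := (T i).le_opNorm x
      _ ≤ 1 * ‖x‖ := by
        exact mul_le_mul_of_nonneg_right (hcontr i) (norm_nonneg x)
      _ = ‖x‖ := one_mul _
  -- gE ≤ gF
  have hgEgF : gE ≤ gF := hlub.2 hgF.1.2
  have hgF0 : (0 : E) ≤ gF := le_trans hgE hgEgF
  -- the auxiliary set for Zorn's lemma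
  set s : Set E :=
    {x : E | gE ≤ x ∧ ‖x‖ ≤ ‖gE‖ ∧ (∀ i, x ≤ T i x) ∧ x ≤ gF} with hs
  have hgEs : gE ∈ s := by
    refine ⟨le_rfl, le_rfl, fun i => ?_, hgEgF⟩
    -- T i gE is an upper bound of G
    apply hlub.2
    intro x hx
    have : T i x ≤ T i gE := hmono i x gE (hlub.1 hx)
    rwa [hG x hx i] at this
  -- chains in s have upper bounds in s
  have hchain : ∀ c ⊆ s, IsChain (· ≤ ·) c → ∀ y ∈ c, ∃ ub ∈ s, ∀ z ∈ c, z ≤ ub := by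
    intro c hcs hc y hy
    have hne : c.Nonempty := ⟨y, hy⟩
    have hdir : DirectedOn (· ≤ ·) c := hc.directedOn
    have hpos' : ∀ x ∈ c, (0 : E) ≤ x := fun x hx => le_trans hgE (hcs hx).1
    have hbd : ∃ C : ℝ, ∀ x ∈ c, ‖x‖ ≤ C := ⟨‖gE‖, fun x hx => (hcs hx).2.1⟩
    obtain ⟨b, hb⟩ := hmc c hne hdir hpos' hbd
    refine ⟨b, ⟨?_, ?_, ?_, ?_⟩, fun z hz => hb.1 hz⟩
    · exact le_trans (hcs hy).1 (hb.1 hy)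
    · rw [hfatou c b hne hdir hpos' hb]
      refine Real.iSup_le (fun x => (hcs x.2).2.1) (norm_nonneg gE)
    · intro i
      apply hb.2
      intro z hz
      exact le_trans ((hcs hz).2.2.1 i) (hmono i z b (hb.1 hz))
    · exact hb.2 (fun z hz => (hcs hz).2.2.2)
  obtain ⟨m, hgEm, hm⟩ := zorn_le_nonempty₀ s hchain gE hgEs
  have hms := hm.prop
  -- m is a fixed point of each T i
  have hfix : ∀ i, T i m = m := by
    intro i
    have hTms : T i m ∈ s := by
      refine ⟨le_trans hms.1 (hms.2.2.1 i), le_trans (hnorm i m) hms.2.1, fun j => ?_, ?_⟩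
      · -- T i m ≤ T j (T i m)
        have h1 := hmono i m (T j m) (hms.2.2.1 j)
        have hcomm' : T i (T j m) = T j (T i m) := by
          have := congrArg (fun f : E →L[ℝ] E => f m) (hcomm i j)
          simpa using this
        rwa [hcomm'] at h1
      · -- T i m ≤ gF
        have h1 := hmono i m gF hms.2.2.2
        rwa [hgF.1.1 i] at h1
    exact le_antisymm (hm.le_of_ge hTms (hms.2.2.1 i)) (hms.2.2.1 i)
  -- m is an upper bound of G fixed by all T i, so gF ≤ m; also m ≤ gF
  have hgFm : gF ≤ m := hgF.2 ⟨hfix, fun x hx => le_trans (hlub.1 hx) hms.1⟩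
  have hmgF : m = gF := le_antisymm hms.2.2.2 hgFm
  have h1 : ‖gF‖ ≤ ‖gE‖ := hmgF ▸ hms.2.1
  have h2 : ‖gE‖ ≤ ‖gF‖ := by
    apply HasSolidNorm.solid
    rw [abs_of_nonneg hgE, abs_of_nonneg hgF0]
    exact hgEgF
  exact le_antisymm h1 h2
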